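/- arXiv:1402.5324 — 6 statements merged into one kernel-verified Lean document; each statement's English description precedes it below -/
import Mathlib

section
/- Let U be an isometry of ℓ²(ℕ) with entries u_{i,j}, and define the block coherence μ(R_N U) = sup_{i ≥ N, j ∈ ℕ} |u_{i,j}|². Then the series ∑_{N=1}^∞ μ(R_N U) diverges. -/
open scoped InnerProductSpace

/-- The `(i,j)` matrix entry `U_{ij} = ⟨U e_j, e_i⟩` of an operator on `ℓ²(ℕ)`. -/
noncomputable def entry (U : lp (fun _ : ℕ => ℂ) 2 →ₗᵢ[ℂ] lp (fun _ : ℕ => ℂ) 2)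
    (i j : ℕ) : ℂ :=
  ⟪U (lp.single 2 j 1), lp.single 2 i 1⟫_ℂ

/-- The block coherence `μ(R_N U) = sup_{i ≥ N, j ∈ ℕ} |U_{ij}|²`. -/
noncomputable def muR (U : lp (fun _ : ℕ => ℂ) 2 →ₗᵢ[ℂ] lp (fun _ : ℕ => ℂ) 2)
    (N : ℕ) : ℝ :=
  ⨆ i : {i : ℕ // N ≤ i}, ⨆ j : ℕ, ‖entry U i j‖ ^ 2

open scoped ENNReal

section aux
variable (U : lp (fun _ : ℕ => ℂ) 2 →ₗᵢ[ℂ] lp (fun _ : ℕ => ℂ) 2)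

lemma norm_e (i : ℕ) : ‖(lp.single 2 i (1:ℂ) : lp (fun _ : ℕ => ℂ) 2)‖ = 1 := by
  have := lp.norm_single (p := 2) (E := fun _ : ℕ => ℂ) (by norm_num) i (1:ℂ)
  simpa using this

lemma orthE : Orthonormal ℂ (fun i : ℕ => (lp.single 2 i (1:ℂ) : lp (fun _ : ℕ => ℂ) 2)) := by
  rw [orthonormal_iff_ite]
  intro i j
  rw [lp.inner_single_left, lp.single_apply]
  split_ifs with h
  · simp [h]
  · simp [Ne.symm h]

lemma entry_eq (i j : ℕ) : ‖entry U i j‖ = ‖(U (lp.single 2 j 1) : ∀ _ : ℕ, ℂ) i‖ := by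
  rw [entry, lp.inner_single_right]
  simp [RCLike.inner_apply]

lemma entry_le_one (i j : ℕ) : ‖entry U i j‖ ^ 2 ≤ 1 := by
  have h := norm_inner_le_norm (𝕜 := ℂ) (U (lp.single 2 j 1)) (lp.single 2 i (1:ℂ))
  rw [U.norm_map, norm_e, norm_e, mul_one] at h
  have h' : ‖entry U i j‖ ≤ 1 := h
  calc ‖entry U i j‖ ^ 2 ≤ 1 ^ 2 := pow_le_pow_left₀ (norm_nonneg _) h' 2
    _ = 1 := one_pow 2

lemma col_hasSum (j : ℕ) : HasSum (fun i => ‖entry U i j‖ ^ 2) 1 := by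
  set f := U (lp.single 2 j (1:ℂ)) with hf
  have h2 : ((2:ℝ≥0∞)).toReal = (2:ℝ) := by norm_num
  have heq : (fun i => ‖entry U i j‖ ^ 2) = fun i => ‖(f : ∀ _ : ℕ, ℂ) i‖ ^ (2:ℝ) := by
    funext i
    rw [entry_eq, ← Real.rpow_natCast]
    norm_num
    rfl
  have hs : Summable (fun i => ‖(f : ∀ _ : ℕ, ℂ) i‖ ^ (2:ℝ)) := by
    have := (lp.memℓp f).summable (by rw [h2]; norm_num : 0 < ((2:ℝ≥0∞)).toReal)
    simpa [h2] using this
  have hnorm : ‖f‖ ^ ((2:ℝ≥0∞)).toReal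
      = ∑' i, ‖(f : ∀ _ : ℕ, ℂ) i‖ ^ ((2:ℝ≥0∞)).toReal :=
    lp.norm_rpow_eq_tsum (by rw [h2]; norm_num) _
  rw [hf, U.norm_map, norm_e, h2] at hnorm
  have hone : (∑' i, ‖(f : ∀ _ : ℕ, ℂ) i‖ ^ (2:ℝ)) = 1 := by
    simp only [h2] at hnorm
    rw [← hnorm]
    norm_num
  rw [heq]
  exact hone ▸ hs.hasSum

lemma row_bessel (i : ℕ) : ∑' j, ‖entry U i j‖ ^ 2 ≤ 1 := by
  have horth := (orthE).comp_linearIsometry U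
  have h := horth.tsum_inner_products_le (lp.single 2 i (1:ℂ))
  rw [norm_e, one_pow] at h
  exact h

lemma row_summable (i : ℕ) : Summable (fun j => ‖entry U i j‖ ^ 2) :=
  ((orthE).comp_linearIsometry U).inner_products_summable _

lemma muR_ge {N i : ℕ} (hNi : N ≤ i) (j : ℕ) : ‖entry U i j‖ ^ 2 ≤ muR U N := by
  have hbj : ∀ i' : {i : ℕ // N ≤ i}, BddAbove (Set.range fun j => ‖entry U i' j‖ ^ 2) :=
    fun i' => ⟨1, by rintro _ ⟨j, rfl⟩; exact entry_le_one U _ j⟩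
  have h1 : ‖entry U i j‖ ^ 2 ≤ ⨆ j', ‖entry U (⟨i, hNi⟩ : {i : ℕ // N ≤ i}) j'‖ ^ 2 :=
    le_ciSup (hbj ⟨i, hNi⟩) j
  refine h1.trans (le_ciSup (f := fun i' : {i : ℕ // N ≤ i} => ⨆ j', ‖entry U i' j'‖ ^ 2) ?_ ⟨i, hNi⟩)
  exact ⟨1, by rintro _ ⟨i', rfl⟩; exact ciSup_le fun j' => entry_le_one U _ j'⟩

end aux

set_option maxHeartbeats 1000000 in
/-- For any isometry `U` of `ℓ²(ℕ)`, the series `∑_N μ(R_N U)` diverges. -/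
theorem statement0 (U : lp (fun _ : ℕ => ℂ) 2 →ₗᵢ[ℂ] lp (fun _ : ℕ => ℂ) 2) :
    ¬ Summable (fun N : ℕ => muR U N) := by
  intro h
  have htail : Filter.Tendsto (fun N => ∑' k, muR U (k + N)) Filter.atTop (nhds 0) :=
    tendsto_sum_nat_add _
  obtain ⟨N, hN⟩ := (htail.eventually (gt_mem_nhds (by norm_num : (0:ℝ) < 1/2))).exists
  set t := ∑' k, muR U (k + N) with ht
  -- column partial sums: for each j, ∑_{i<N} ≥ 1 - t
  have hcolsum : ∀ j, 1 - t ≤ ∑ i ∈ Finset.range N, ‖entry U i j‖ ^ 2 := by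
    intro j
    have hsplit := Summable.sum_add_tsum_nat_add N (col_hasSum U j).summable
    rw [(col_hasSum U j).tsum_eq] at hsplit
    have htl : ∑' k, ‖entry U (k + N) j‖ ^ 2 ≤ t := by
      refine Summable.tsum_le_tsum (fun k => muR_ge U (le_refl (k + N)) j) ?_ ?_
      · exact (summable_nat_add_iff N).mpr (col_hasSum U j).summable
      · exact (summable_nat_add_iff N).mpr h
    linarith
  -- row partial sums ≤ 1
  have hrowsum : ∀ i (M : ℕ), ∑ j ∈ Finset.range M, ‖entry U i j‖ ^ 2 ≤ 1 := by
    intro i M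
    exact (Summable.sum_le_tsum _ (fun j _ => by positivity) (row_summable U i)).trans (row_bessel U i)
  -- combine
  have key : ∀ M : ℕ, (M : ℝ) * (1 - t) ≤ N := by
    intro M
    have h1 : (M : ℝ) * (1 - t) ≤ ∑ j ∈ Finset.range M, ∑ i ∈ Finset.range N, ‖entry U i j‖ ^ 2 := by
      calc (M : ℝ) * (1 - t) = ∑ _j ∈ Finset.range M, (1 - t) := by
            rw [Finset.sum_const, Finset.card_range, nsmul_eq_mul]
        _ ≤ _ := Finset.sum_le_sum fun j _ => hcolsum j
    rw [Finset.sum_comm] at h1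
    have h2 : ∑ i ∈ Finset.range N, ∑ j ∈ Finset.range M, ‖entry U i j‖ ^ 2
        ≤ ∑ _i ∈ Finset.range N, (1:ℝ) := Finset.sum_le_sum fun i _ => hrowsum i M
    simp only [Finset.sum_const, Finset.card_range, nsmul_eq_mul, mul_one] at h2
    linarith
  have := key (2 * N + 1)
  have h2 : (1:ℝ)/2 < 1 - t := by linarith
  push_cast at this
  nlinarith [this, h2, Nat.cast_nonneg (α := ℝ) N]
end

section
/- Let f, g : ℕ → ℝ be strictly positive decreasing functions with f(N), g(N) ≤ 1 for all N, and suppose ∑_N f(N) diverges. Then there exists an isometry U of ℓ²(ℕ) such that μ(R_N U) ≤ f(N) and μ(U R_N) ≤ g(N) for all N ∈ ℕ. -/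
open scoped InnerProductSpace

/-- The block coherence `μ(U R_N) = sup_{i, j ≥ N} |U_{ij}|²`. -/
noncomputable def muC (U : lp (fun _ : ℕ => ℂ) 2 →ₗᵢ[ℂ] lp (fun _ : ℕ => ℂ) 2)
    (N : ℕ) : ℝ :=
  ⨆ i : ℕ, ⨆ j : {j : ℕ // N ≤ j}, ‖entry U i j‖ ^ 2

section Aux

variable {f g : ℕ → ℝ}

lemma exists_block (hfpos : ∀ N, 0 < f N) (hgpos : ∀ N, 0 < g N)
    (hf1 : ∀ N, f N ≤ 1) (hg1 : ∀ N, g N ≤ 1) (hdiv : ¬ Summable f) (n j : ℕ) :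
    ∃ m, 1 ≤ ∑ i ∈ Finset.Ico n m, min (f i) (g j) := by
  have htend : Filter.Tendsto (fun m => ∑ i ∈ Finset.range m, f i) Filter.atTop Filter.atTop :=
    (not_summable_iff_tendsto_nat_atTop_of_nonneg (fun n => (hfpos n).le)).1 hdiv
  obtain ⟨m, hm⟩ := (htend.eventually_ge_atTop ((∑ i ∈ Finset.range n, f i) + 1 / g j)).exists
  rcases le_or_gt m n with h | h
  · exfalso
    have : ∑ i ∈ Finset.range m, f i ≤ ∑ i ∈ Finset.range n, f i :=
      Finset.sum_le_sum_of_subset_of_nonneg (Finset.range_subset_range.2 h)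
        (fun i _ _ => (hfpos i).le)
    have hgj : 0 < 1 / g j := one_div_pos.2 (hgpos j)
    linarith
  · refine ⟨m, ?_⟩
    have hsplit : ∑ i ∈ Finset.range n, f i + ∑ i ∈ Finset.Ico n m, f i
        = ∑ i ∈ Finset.range m, f i := by
      exact Finset.sum_range_add_sum_Ico f h.le
    have h1 : 1 / g j ≤ ∑ i ∈ Finset.Ico n m, f i := by linarith
    have h2 : ∀ i, g j * f i ≤ min (f i) (g j) := by
      intro i
      rcases le_total (f i) (g j) with h' | h'
      · rw [min_eq_left h']
        nlinarith [(hfpos i).le, hg1 j]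
      · rw [min_eq_right h']
        nlinarith [(hgpos j).le, hf1 i]
    calc (1:ℝ) = g j * (1 / g j) := by rw [mul_one_div, div_self (hgpos j).ne']
    _ ≤ g j * ∑ i ∈ Finset.Ico n m, f i := by
        apply mul_le_mul_of_nonneg_left h1 (hgpos j).le
    _ = ∑ i ∈ Finset.Ico n m, g j * f i := Finset.mul_sum _ _ _
    _ ≤ _ := Finset.sum_le_sum fun i _ => h2 i

private noncomputable def bndAux (hfpos : ∀ N, 0 < f N) (hgpos : ∀ N, 0 < g N)
    (hf1 : ∀ N, f N ≤ 1) (hg1 : ∀ N, g N ≤ 1) (hdiv : ¬ Summable f) : ℕ → ℕ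
  | 0 => 0
  | j+1 =>
      letI := Classical.dec
      Nat.find (exists_block hfpos hgpos hf1 hg1 hdiv
        (bndAux hfpos hgpos hf1 hg1 hdiv j) j)

lemma exists_bnd (hfpos : ∀ N, 0 < f N) (hgpos : ∀ N, 0 < g N)
    (hf1 : ∀ N, f N ≤ 1) (hg1 : ∀ N, g N ≤ 1) (hdiv : ¬ Summable f) :
    ∃ n : ℕ → ℕ, n 0 = 0 ∧ StrictMono n ∧
      ∀ j, 1 ≤ ∑ i ∈ Finset.Ico (n j) (n (j+1)), min (f i) (g j) := by
  classical
  refine ⟨bndAux hfpos hgpos hf1 hg1 hdiv, rfl, ?_, ?_⟩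
  · apply strictMono_nat_of_lt_succ
    intro j
    by_contra h
    push_neg at h
    have hs : 1 ≤ ∑ i ∈ Finset.Ico (bndAux hfpos hgpos hf1 hg1 hdiv j)
        (bndAux hfpos hgpos hf1 hg1 hdiv (j+1)), min (f i) (g j) := by
      simpa [bndAux] using
        Nat.find_spec (exists_block hfpos hgpos hf1 hg1 hdiv
          (bndAux hfpos hgpos hf1 hg1 hdiv j) j)
    rw [Finset.Ico_eq_empty (by omega)] at hs
    simp at hs
    linarith
  · intro j
    simpa [bndAux] using
      Nat.find_spec (exists_block hfpos hgpos hf1 hg1 hdiv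
        (bndAux hfpos hgpos hf1 hg1 hdiv j) j)

end Aux

/-- Given strictly positive decreasing `f, g ≤ 1` with `∑ f` divergent, there is an
isometry `U` of `ℓ²(ℕ)` with `μ(R_N U) ≤ f(N)` and `μ(U R_N) ≤ g(N)` for all `N`. -/
theorem statement1 (f g : ℕ → ℝ) (hfpos : ∀ N, 0 < f N) (hgpos : ∀ N, 0 < g N)
    (hf : Antitone f) (hg : Antitone g)
    (hf1 : ∀ N, f N ≤ 1) (hg1 : ∀ N, g N ≤ 1)
    (hdiv : ¬ Summable f) :
    ∃ U : lp (fun _ : ℕ => ℂ) 2 →ₗᵢ[ℂ] lp (fun _ : ℕ => ℂ) 2,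
      ∀ N : ℕ, muR U N ≤ f N ∧ muC U N ≤ g N := by
  classical
  obtain ⟨n, hn0, hmono, hspec⟩ := exists_bnd hfpos hgpos hf1 hg1 hdiv
  -- the block index of a row
  set col : ℕ → ℕ := fun i => Nat.findGreatest (fun j => n j ≤ i) i with hcol_def
  have hle : ∀ j, j ≤ n j := fun j => hmono.le_apply
  have hcol1 : ∀ i, n (col i) ≤ i := by
    intro i
    exact Nat.findGreatest_spec (P := fun j => n j ≤ i) (Nat.zero_le i) (by simp [hn0])
  have hcol2 : ∀ i, i < n (col i + 1) := by
    intro i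
    by_contra h
    push_neg at h
    have h1 : col i + 1 ≤ i := le_trans (hle _) h
    exact Nat.findGreatest_is_greatest (P := fun j => n j ≤ i) (lt_add_one _) h1 h
  have hcol_eq : ∀ i j, n j ≤ i → i < n (j+1) → col i = j := by
    intro i j h1 h2
    have a1 : col i < j + 1 := hmono.lt_iff_lt.mp (lt_of_le_of_lt (hcol1 i) h2)
    have a2 : j < col i + 1 := hmono.lt_iff_lt.mp (lt_of_le_of_lt h1 (hcol2 i))
    omega
  -- the water-filling coefficients
  set c : ℕ → ℝ := fun i => min (min (f i) (g (col i)))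
      (max 0 (1 - ∑ k ∈ Finset.Ico (n (col i)) i, min (f k) (g (col i)))) with hc_def
  have hc0 : ∀ i, 0 ≤ c i := fun i =>
    le_min (le_min (hfpos i).le (hgpos _).le) (le_max_left _ _)
  have hcf : ∀ i, c i ≤ f i := fun i => (min_le_left _ _).trans (min_le_left _ _)
  have hcg : ∀ i, c i ≤ g (col i) := fun i => (min_le_left _ _).trans (min_le_right _ _)
  have hpartial : ∀ j m, n j ≤ m → m ≤ n (j+1) →
      ∑ i ∈ Finset.Ico (n j) m, c i
        = min 1 (∑ i ∈ Finset.Ico (n j) m, min (f i) (g j)) := by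
    intro j m hm
    induction m, hm using Nat.le_induction with
    | base => intro _; simp
    | succ m hm ih =>
      intro hm'
      have hmlt : m < n (j+1) := by omega
      have hcolm : col m = j := hcol_eq m j hm hmlt
      rw [Finset.sum_Ico_succ_top hm, Finset.sum_Ico_succ_top hm, ih hmlt.le]
      have hcm : c m = min (min (f m) (g j))
          (max 0 (1 - ∑ k ∈ Finset.Ico (n j) m, min (f k) (g j))) := by
        rw [hc_def]
        simp only [hcolm]
      rw [hcm]
      set S := ∑ i ∈ Finset.Ico (n j) m, min (f i) (g j) with hS_def
      set b := min (f m) (g j) with hb_def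
      have hb : 0 ≤ b := le_min (hfpos m).le (hgpos j).le
      have hS : 0 ≤ S := Finset.sum_nonneg fun i _ => le_min (hfpos i).le (hgpos j).le
      simp only [min_def, max_def]
      split_ifs <;> linarith
  have hsum1 : ∀ j, ∑ i ∈ Finset.Ico (n j) (n (j+1)), c i = 1 := by
    intro j
    rw [hpartial j _ (hmono (Nat.lt_succ_self j)).le le_rfl, min_eq_left (hspec j)]
  -- the analytic part
  set e : ℕ → lp (fun _ : ℕ => ℂ) 2 := fun i => lp.single 2 i 1 with he_def
  have he : Orthonormal ℂ e := by
    rw [orthonormal_iff_ite]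
    intro i j
    by_cases h : i = j
    · subst h
      simp [he_def, lp.inner_single_left, RCLike.inner_apply, lp.single_apply]
    · simp [he_def, lp.inner_single_left, RCLike.inner_apply, lp.single_apply, h]
  set a : ℕ → ℝ := fun i => Real.sqrt (c i) with ha_def
  set u : ℕ → lp (fun _ : ℕ => ℂ) 2 :=
    fun j => ∑ i ∈ Finset.Ico (n j) (n (j+1)), ((a i : ℂ)) • e i with hu_def
  have hnormu : ∀ j, ‖u j‖ = 1 := by
    intro j
    have h1 : ⟪u j, u j⟫_ℂ = 1 := by
      rw [hu_def]
      rw [he.inner_sum]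
      have : ∀ i ∈ Finset.Ico (n j) (n (j+1)),
          (starRingEnd ℂ) ((a i : ℂ)) * (a i : ℂ) = ((c i : ℝ) : ℂ) := by
        intro i _
        rw [Complex.conj_ofReal, ← Complex.ofReal_mul, Real.mul_self_sqrt (hc0 i)]
      rw [Finset.sum_congr rfl this, ← Complex.ofReal_sum, hsum1 j, Complex.ofReal_one]
    have h3 : ‖u j‖ ^ 2 = 1 := by
      rw [InnerProductSpace.norm_sq_eq_re_inner (𝕜 := ℂ), h1]
      simp
    calc ‖u j‖ = Real.sqrt (‖u j‖ ^ 2) := (Real.sqrt_sq (norm_nonneg _)).symm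
    _ = 1 := by rw [h3, Real.sqrt_one]
  have hdisj : ∀ j k, j ≠ k →
      Disjoint (Finset.Ico (n j) (n (j+1))) (Finset.Ico (n k) (n (k+1))) := by
    intro j k hjk
    rw [Finset.disjoint_left]
    intro x hx1 hx2
    rw [Finset.mem_Ico] at hx1 hx2
    rcases hjk.lt_or_gt with h | h
    · have : n (j+1) ≤ n k := hmono.monotone h
      omega
    · have : n (k+1) ≤ n j := hmono.monotone h
      omega
  have horthou : ∀ j k, j ≠ k → ⟪u j, u k⟫_ℂ = 0 := by
    intro j k hjk
    rw [hu_def]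
    rw [sum_inner]
    apply Finset.sum_eq_zero
    intro p hp
    have hinner : ⟪e p, ∑ i ∈ Finset.Ico (n k) (n (k+1)), ((a i : ℂ)) • e i⟫_ℂ = 0 := by
      rw [inner_sum]
      apply Finset.sum_eq_zero
      intro q hq
      have hpq : p ≠ q := by
        intro h
        exact Finset.disjoint_left.mp (hdisj j k hjk) hp (h ▸ hq)
      rw [inner_smul_right, orthonormal_iff_ite.mp he p q, if_neg hpq, mul_zero]
    rw [inner_smul_left, hinner, mul_zero]
  set V : ∀ _ : ℕ, ℂ →ₗᵢ[ℂ] lp (fun _ : ℕ => ℂ) 2 := fun j =>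
    { toLinearMap := LinearMap.toSpanSingleton ℂ _ (u j)
      norm_map' := fun x => by
        simp [LinearMap.toSpanSingleton_apply, norm_smul, hnormu j] } with hV_def
  have hV : OrthogonalFamily ℂ (fun _ : ℕ => ℂ) V := by
    intro j k hjk v w
    have : ⟪v • u j, w • u k⟫_ℂ = 0 := by
      rw [inner_smul_left, inner_smul_right, horthou j k hjk, mul_zero, mul_zero]
    simp [hV_def, LinearMap.toSpanSingleton_apply, horthou j k hjk]
    exact this
  refine ⟨hV.linearIsometry, ?_⟩
  have hentry : ∀ i j, ‖entry hV.linearIsometry i j‖ ^ 2 ≤ min (f i) (g j) := by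
    intro i j
    have h1 : entry hV.linearIsometry i j = ⟪u j, e i⟫_ℂ := by
      unfold entry
      rw [hV.linearIsometry_apply_single]
      have : V j 1 = u j := by
        simp [hV_def, LinearMap.toSpanSingleton_apply]
      rw [this, he_def]
    by_cases hi : i ∈ Finset.Ico (n j) (n (j+1))
    · have h2 : ⟪u j, e i⟫_ℂ = (a i : ℂ) := by
        rw [hu_def]
        rw [he.inner_left_sum _ hi, Complex.conj_ofReal]
      rw [h1, h2]
      have h3 : ‖((a i : ℝ) : ℂ)‖ = a i := by
        rw [Complex.norm_real, Real.norm_eq_abs, abs_of_nonneg (Real.sqrt_nonneg _)]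
      rw [h3, ha_def]
      simp only
      rw [Real.sq_sqrt (hc0 i)]
      rw [Finset.mem_Ico] at hi
      have hcolij : col i = j := hcol_eq i j hi.1 hi.2
      exact le_min (hcf i) (hcolij ▸ hcg i)
    · have h2 : ⟪u j, e i⟫_ℂ = 0 := by
        rw [hu_def, sum_inner]
        apply Finset.sum_eq_zero
        intro q hq
        have hqi : q ≠ i := fun h => hi (h ▸ hq)
        rw [inner_smul_left, orthonormal_iff_ite.mp he q i, if_neg hqi, mul_zero]
      rw [h1, h2, norm_zero]
      have : (0:ℝ) ^ 2 = 0 := by ring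
      rw [this]
      exact le_min (hfpos i).le (hgpos j).le
  intro N
  constructor
  · haveI : Nonempty {i : ℕ // N ≤ i} := ⟨⟨N, le_rfl⟩⟩
    apply ciSup_le
    intro i
    apply ciSup_le
    intro j
    exact (hentry i j).trans ((min_le_left _ _).trans (hf i.2))
  · apply ciSup_le
    intro i
    haveI : Nonempty {j : ℕ // N ≤ j} := ⟨⟨N, le_rfl⟩⟩
    apply ciSup_le
    intro j
    exact (hentry i j).trans ((min_le_right _ _).trans (hg j.2))
end

section
/- For any isometry U of ℓ²(ℕ) and any ε > 0, it is not the case that μ(R_N U) = O(N^{-1-ε}) as N → ∞. -/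
open scoped InnerProductSpace

set_option maxHeartbeats 1600000 in
open Filter Finset in
/-- For an isometry `U` of `ℓ²(ℕ)` and any `ε > 0`, it is not the case that
`μ(R_N U) = O(N^{-1-ε})`, i.e. there is no `C > 0` with
`μ(R_N U) ≤ C N^{-1-ε}` for all `N ≥ 1`. -/
theorem statement2 (U : lp (fun _ : ℕ => ℂ) 2 →ₗᵢ[ℂ] lp (fun _ : ℕ => ℂ) 2)
    (ε : ℝ) (hε : 0 < ε) :
    ¬ ∃ C : ℝ, 0 < C ∧ ∀ N : ℕ, 1 ≤ N → muR U N ≤ C * (N : ℝ) ^ (-(1 : ℝ) - ε) := by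
  classical
  rintro ⟨C, hC, hbound⟩
  set e : ℕ → lp (fun _ : ℕ => ℂ) 2 := fun i => lp.single 2 i 1 with he
  have horth : Orthonormal ℂ e := by
    rw [orthonormal_iff_ite]
    intro i j
    simp only [he]
    rw [lp.inner_single_left, lp.single_apply]
    by_cases h : i = j <;> simp [h]
  have hnorm_e : ∀ i, ‖e i‖ = 1 := horth.1
  have hUorth : Orthonormal ℂ (⇑U ∘ e) := horth.comp_linearIsometry U
  have hrpow : ∀ x : ℝ, x ^ ((2 : ENNReal).toReal) = x ^ (2 : ℕ) := by
    intro x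
    rw [ENNReal.toReal_ofNat, ← Real.rpow_natCast x 2]
    norm_num
  -- entry norm = coordinate norm of the column
  have hentry : ∀ i j, ‖entry U i j‖ = ‖(U (e j) : ∀ _ : ℕ, ℂ) i‖ := by
    intro i j
    rw [entry, lp.inner_single_right]
    simp [RCLike.inner_apply]
    rfl
  -- each entry has norm at most 1
  have hentry1 : ∀ i j, ‖entry U i j‖ ^ 2 ≤ 1 := by
    intro i j
    have h : ‖entry U i j‖ ≤ 1 := by
      rw [hentry]
      refine (lp.norm_apply_le_norm (by norm_num) (U (e j)) i).trans ?_
      rw [U.norm_map, hnorm_e]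
    have h0 : (0:ℝ) ≤ ‖entry U i j‖ := norm_nonneg _
    nlinarith
  -- entries dominated by muR
  have hmu : ∀ N i j, N ≤ i → ‖entry U i j‖ ^ 2 ≤ muR U N := by
    intro N i j hNi
    have hbdd_inner : ∀ i', BddAbove (Set.range fun j : ℕ => ‖entry U i' j‖ ^ 2) := by
      intro i'
      exact ⟨1, by rintro _ ⟨j', rfl⟩; exact hentry1 i' j'⟩
    have h1 : ‖entry U i j‖ ^ 2 ≤ ⨆ j' : ℕ, ‖entry U i j'‖ ^ 2 := le_ciSup (hbdd_inner i) j
    have h2 : (⨆ j' : ℕ, ‖entry U i j'‖ ^ 2) ≤ muR U N := by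
      have hbdd : BddAbove (Set.range fun i' : {i' : ℕ // N ≤ i'} =>
          ⨆ j' : ℕ, ‖entry U i' j'‖ ^ 2) := by
        refine ⟨1, ?_⟩
        rintro _ ⟨i', rfl⟩
        exact ciSup_le fun j' => hentry1 i' j'
      exact le_ciSup hbdd ⟨i, hNi⟩
    exact h1.trans h2
  -- column sums
  have hsum : ∀ j, Summable (fun i => ‖entry U i j‖ ^ 2) := by
    intro j
    have h := (lp.memℓp (U (e j))).summable (by norm_num : 0 < (2 : ENNReal).toReal)
    exact h.congr fun i => by rw [hrpow, hentry]
  have htsum : ∀ j, ∑' i, ‖entry U i j‖ ^ 2 = 1 := by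
    intro j
    have h := lp.norm_rpow_eq_tsum (by norm_num : 0 < (2 : ENNReal).toReal) (U (e j))
    rw [U.norm_map, hnorm_e, Real.one_rpow] at h
    calc ∑' i, ‖entry U i j‖ ^ 2
        = ∑' i, ‖(U (e j) : ∀ _ : ℕ, ℂ) i‖ ^ ((2 : ENNReal).toReal) :=
          tsum_congr fun i => by rw [hrpow, hentry]
      _ = 1 := h.symm
  -- dominating summable series
  have hg : Summable (fun i : ℕ => C * (i : ℝ) ^ (-(1 : ℝ) - ε)) :=
    (Real.summable_nat_rpow.mpr (by linarith)).mul_left C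
  have htail := tendsto_sum_nat_add (fun i : ℕ => C * (i : ℝ) ^ (-(1 : ℝ) - ε))
  obtain ⟨N, hNtail, hN1⟩ :=
    ((htail.eventually (gt_mem_nhds (by norm_num : (0 : ℝ) < 1 / 2))).and
      (eventually_ge_atTop 1)).exists
  -- each column puts at least 1/2 of its mass in the first N coordinates
  have hhead : ∀ j, (1 : ℝ) / 2 ≤ ∑ i ∈ Finset.range N, ‖entry U i j‖ ^ 2 := by
    intro j
    have h1 := Summable.sum_add_tsum_nat_add (f := fun i => ‖entry U i j‖ ^ 2) N (hsum j)
    rw [htsum j] at h1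
    have h2 : ∑' k, ‖entry U (k + N) j‖ ^ 2 ≤
        ∑' k, C * ((k + N : ℕ) : ℝ) ^ (-(1 : ℝ) - ε) := by
      refine Summable.tsum_le_tsum ?_ ((summable_nat_add_iff N).2 (hsum j))
        ((summable_nat_add_iff N).2 hg)
      intro k
      refine (hmu (k + N) (k + N) j le_rfl).trans ?_
      exact hbound (k + N) (by omega)
    have h3 : ∑' k, C * ((k + N : ℕ) : ℝ) ^ (-(1 : ℝ) - ε) < 1 / 2 := hNtail
    linarith
  -- Bessel: each row of the first N rows carries total mass at most 1 over all columns
  have hrow : ∀ i, ∀ M : ℕ, ∑ j ∈ Finset.range M, ‖entry U i j‖ ^ 2 ≤ 1 := by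
    intro i M
    have h := hUorth.sum_inner_products_le (s := Finset.range M) (e i)
    rw [hnorm_e, one_pow] at h
    exact h
  have key : ∀ M : ℕ, (M : ℝ) * (1 / 2) ≤ N := by
    intro M
    calc (M : ℝ) * (1 / 2) = ∑ _j ∈ Finset.range M, (1 / 2 : ℝ) := by
          simp [mul_comm]
      _ ≤ ∑ j ∈ Finset.range M, ∑ i ∈ Finset.range N, ‖entry U i j‖ ^ 2 :=
          Finset.sum_le_sum fun j _ => hhead j
      _ = ∑ i ∈ Finset.range N, ∑ j ∈ Finset.range M, ‖entry U i j‖ ^ 2 := Finset.sum_comm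
      _ ≤ ∑ _i ∈ Finset.range N, (1 : ℝ) := Finset.sum_le_sum fun i _ => hrow i M
      _ = N := by simp
  have hkey := key (2 * N + 1)
  push_cast at hkey
  linarith
end

section
/- Let (a_{m,f})_{m ∈ ℕ, f ∈ B} be a doubly indexed family of nonnegative reals indexed by ℕ and a countable set B, let ρ₁, ρ₂ : ℕ → B be bijections, and let f : ℕ → ℝ_{>0} be decreasing. Define μ(π_N U_k) = sup_m a_{m, ρ_k(N)} and μ(R_N U_k) = sup_{M ≥ N} μ(π_M U_k) for k = 1, 2. If f(N) ≤ μ(π_N U₁) for all N, then f(N) ≤ μ(R_N U₂) for all N. -/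
/-- Abstract reordering lemma: let `a : ℕ → B → ℝ` be a nonnegative doubly indexed family
over `ℕ` and a countable set `B` (here: a type with bijections from `ℕ`), let
`ρ₁ ρ₂ : ℕ ≃ B` be bijections (orderings), and `f : ℕ → ℝ_{>0}` decreasing.  With
`μ(π_N U_k) = sup_m a_{m, ρ_k(N)}` and `μ(R_N U_k) = sup_{M ≥ N} μ(π_M U_k)` (the suprema
taken in `[0,∞]` via `ENNReal.ofReal` so that they always exist), if `f(N) ≤ μ(π_N U₁)`
for all `N`, then `f(N) ≤ μ(R_N U₂)` for all `N`. -/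
theorem statement4 {B : Type*} (a : ℕ → B → ℝ) (ha : ∀ m b, 0 ≤ a m b)
    (ρ₁ ρ₂ : ℕ ≃ B) (f : ℕ → ℝ) (hfpos : ∀ N, 0 < f N) (hf : Antitone f)
    (h : ∀ N : ℕ, ENNReal.ofReal (f N) ≤ ⨆ m : ℕ, ENNReal.ofReal (a m (ρ₁ N))) :
    ∀ N : ℕ, ENNReal.ofReal (f N) ≤
      ⨆ M : {M : ℕ // N ≤ M}, ⨆ m : ℕ, ENNReal.ofReal (a m (ρ₂ M)) := by
  intro N
  -- pigeonhole: some θ ≤ N has ρ₂.symm (ρ₁ θ) ≥ N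
  have hex : ∃ θ : ℕ, θ ≤ N ∧ N ≤ ρ₂.symm (ρ₁ θ) := by
    by_contra hc
    push_neg at hc
    have hinj : Function.Injective (fun i : Fin (N+1) => (⟨ρ₂.symm (ρ₁ i.1),
        by have := hc i.1 (Nat.lt_succ_iff.mp i.2); omega⟩ : Fin N)) := by
      intro i j hij
      simp only [Fin.mk.injEq] at hij
      have : ρ₁ i.1 = ρ₁ j.1 := ρ₂.symm.injective hij
      exact Fin.val_injective (ρ₁.injective this)
    have := Fintype.card_le_of_injective _ hinj
    simp at this
  obtain ⟨θ, hθN, hM⟩ := hex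
  set M := ρ₂.symm (ρ₁ θ) with hMdef
  have hρ : ρ₂ M = ρ₁ θ := ρ₂.apply_symm_apply _
  calc ENNReal.ofReal (f N) ≤ ENNReal.ofReal (f θ) := ENNReal.ofReal_le_ofReal (hf hθN)
    _ ≤ ⨆ m : ℕ, ENNReal.ofReal (a m (ρ₁ θ)) := h θ
    _ = ⨆ m : ℕ, ENNReal.ofReal (a m (ρ₂ (⟨M, hM⟩ : {M : ℕ // N ≤ M}))) := by rw [hρ]
    _ ≤ ⨆ M : {M : ℕ // N ≤ M}, ⨆ m : ℕ, ENNReal.ofReal (a m (ρ₂ M)) :=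
        le_iSup (fun M : {M : ℕ // N ≤ M} => ⨆ m : ℕ, ENNReal.ofReal (a m (ρ₂ M))) ⟨M, hM⟩
end

section
/- Suppose (v_j)_{j ∈ ℕ} is a sequence of unit vectors in ℓ²(ℕ) that are pairwise orthogonal. Then it cannot happen that there exists N' ∈ ℕ with ∑_{i ≥ N'} |（v_j)_i|² ≤ 1/16 for all j ∈ ℕ. -/
open scoped InnerProductSpace

/-- If `(v_j)` is an orthonormal (pairwise orthogonal, unit norm) sequence in `ℓ²(ℕ)`,
then there is no `N'` such that all the tails satisfy
`∑_{i ≥ N'} |(v_j)_i|² ≤ 1/16`. -/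
theorem statement5 (v : ℕ → lp (fun _ : ℕ => ℂ) 2)
    (hnorm : ∀ j, ‖v j‖ = 1)
    (horth : ∀ j j', j ≠ j' → ⟪v j, v j'⟫_ℂ = 0) :
    ¬ ∃ N' : ℕ, ∀ j : ℕ,
      (∑' i : {i : ℕ // N' ≤ i}, ‖(v j : ∀ i : ℕ, ℂ) (i : ℕ)‖ ^ 2) ≤ 1 / 16 := by
  rintro ⟨N, hN⟩
  -- For any f in lp 2, the squared norms are summable with sum ‖f‖².
  have key : ∀ f : lp (fun _ : ℕ => ℂ) 2,
      HasSum (fun i : ℕ => ‖(f : ∀ i : ℕ, ℂ) i‖ ^ 2) (‖f‖ ^ 2) := by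
    intro f
    have h2 : (0 : ℝ) < (2 : ENNReal).toReal := by norm_num
    have := lp.hasSum_norm h2 f
    have e : (2 : ENNReal).toReal = ((2 : ℕ) : ℝ) := by norm_num
    rw [e] at this
    simpa [Real.rpow_natCast] using this
  -- rewriting tsums over {i // i ∉ range N} as tsums over {i // N ≤ i}
  have hset : ∀ g : ℕ → ℝ,
      (∑' i : {x : ℕ // x ∉ Finset.range N}, g i) = ∑' i : {i : ℕ // N ≤ i}, g i := by
    intro g
    exact Equiv.tsum_eq (Equiv.subtypeEquivRight fun x => by
      simp [Finset.mem_range, not_lt]) fun i : {i : ℕ // N ≤ i} => g i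
  -- split the squared norm into head + tail
  have split : ∀ f : lp (fun _ : ℕ => ℂ) 2,
      (∑ i ∈ Finset.range N, ‖(f : ∀ i : ℕ, ℂ) i‖ ^ 2)
        + (∑' i : {i : ℕ // N ≤ i}, ‖(f : ∀ i : ℕ, ℂ) (i : ℕ)‖ ^ 2) = ‖f‖ ^ 2 := by
    intro f
    rw [← hset (fun n : ℕ => ‖(f : ∀ i : ℕ, ℂ) n‖ ^ 2)]
    rw [Summable.sum_add_tsum_subtype_compl (key f).summable (Finset.range N), (key f).tsum_eq]
  -- truncated vectors in Euclidean space
  set w : ℕ → EuclideanSpace ℂ (Fin N) := fun j => WithLp.toLp 2 (fun i => (v j : ∀ i : ℕ, ℂ) i) with hw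
  have hwnormsq : ∀ j j', ‖w j - w j'‖ ^ 2
      = ∑ i ∈ Finset.range N, ‖(v j : ∀ i : ℕ, ℂ) i - (v j' : ∀ i : ℕ, ℂ) i‖ ^ 2 := by
    intro j j'
    rw [EuclideanSpace.norm_eq, Real.sq_sqrt (by positivity)]
    rw [← Fin.sum_univ_eq_sum_range fun i => ‖(v j : ∀ i : ℕ, ℂ) i - (v j' : ∀ i : ℕ, ℂ) i‖ ^ 2]
    rfl
  have hwnormsq1 : ∀ j, ‖w j‖ ^ 2 = ∑ i ∈ Finset.range N, ‖(v j : ∀ i : ℕ, ℂ) i‖ ^ 2 := by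
    intro j
    rw [EuclideanSpace.norm_eq, Real.sq_sqrt (by positivity)]
    rw [← Fin.sum_univ_eq_sum_range fun i => ‖(v j : ∀ i : ℕ, ℂ) i‖ ^ 2]
  -- tails are nonneg
  have tail_nonneg : ∀ j, (0:ℝ) ≤ ∑' i : {i : ℕ // N ≤ i}, ‖(v j : ∀ i : ℕ, ℂ) (i : ℕ)‖ ^ 2 :=
    fun j => tsum_nonneg fun i => by positivity
  -- ‖w j‖ ≤ 1
  have hwle : ∀ j, ‖w j‖ ≤ 1 := by
    intro j
    have h1 := split (v j)
    rw [hnorm j] at h1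
    have h2 := hwnormsq1 j
    nlinarith [norm_nonneg (w j), tail_nonneg j]
  -- compactness: find two close truncations
  have hc : IsCompact (Metric.closedBall (0 : EuclideanSpace ℂ (Fin N)) 1) :=
    isCompact_closedBall _ _
  obtain ⟨x, -, φ, hφ, hlim⟩ := hc.tendsto_subseq
    (x := w) (fun j => by simpa [Metric.mem_closedBall] using hwle j)
  have hcauchy := hlim.cauchySeq
  obtain ⟨M, hM⟩ := Metric.cauchySeq_iff'.mp hcauchy 1 one_pos
  have hdist : dist (w (φ (M+1))) (w (φ M)) < 1 := hM (M+1) (Nat.le_succ M)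
  set j := φ (M + 1)
  set j' := φ M
  have hjj' : j ≠ j' := Nat.ne_of_gt (hφ (Nat.lt_succ_self M))
  -- the difference u = v j - v j'
  set u := v j - v j' with hu
  have hucoe : ∀ i : ℕ, (u : ∀ i : ℕ, ℂ) i = (v j : ∀ i : ℕ, ℂ) i - (v j' : ∀ i : ℕ, ℂ) i := by
    intro i; rw [hu]; rfl
  -- ‖u‖² = 2
  have hu2 : ‖u‖ ^ 2 = 2 := by
    rw [hu, @norm_sub_sq ℂ _ _ _ _ (v j) (v j'), horth j j' hjj', hnorm j, hnorm j']
    norm_num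
  -- tail of u is ≤ 1/4
  have htail : (∑' i : {i : ℕ // N ≤ i}, ‖(u : ∀ i : ℕ, ℂ) (i : ℕ)‖ ^ 2) ≤ 1/4 := by
    have hsumj : Summable (fun i : {i : ℕ // N ≤ i} => ‖(v j : ∀ i : ℕ, ℂ) (i : ℕ)‖ ^ 2) := by
      exact ((key (v j)).summable.subtype {i : ℕ | N ≤ i})
    have hsumj' : Summable (fun i : {i : ℕ // N ≤ i} => ‖(v j' : ∀ i : ℕ, ℂ) (i : ℕ)‖ ^ 2) := by
      exact ((key (v j')).summable.subtype {i : ℕ | N ≤ i})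
    have hle : ∀ i : {i : ℕ // N ≤ i}, ‖(u : ∀ i : ℕ, ℂ) (i : ℕ)‖ ^ 2
        ≤ 2 * ‖(v j : ∀ i : ℕ, ℂ) (i : ℕ)‖ ^ 2 + 2 * ‖(v j' : ∀ i : ℕ, ℂ) (i : ℕ)‖ ^ 2 := by
      intro i
      rw [hucoe]
      have h1 : ‖(v j : ∀ i : ℕ, ℂ) (i : ℕ) - (v j' : ∀ i : ℕ, ℂ) (i : ℕ)‖
          ≤ ‖(v j : ∀ i : ℕ, ℂ) (i : ℕ)‖ + ‖(v j' : ∀ i : ℕ, ℂ) (i : ℕ)‖ := norm_sub_le _ _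
      nlinarith [norm_nonneg ((v j : ∀ i : ℕ, ℂ) (i : ℕ)),
        norm_nonneg ((v j' : ∀ i : ℕ, ℂ) (i : ℕ)),
        norm_nonneg ((v j : ∀ i : ℕ, ℂ) (i : ℕ) - (v j' : ∀ i : ℕ, ℂ) (i : ℕ)),
        mul_self_le_mul_self (norm_nonneg ((v j : ∀ i : ℕ, ℂ) (i : ℕ) - (v j' : ∀ i : ℕ, ℂ) (i : ℕ))) h1,
        sq_nonneg (‖(v j : ∀ i : ℕ, ℂ) (i : ℕ)‖ - ‖(v j' : ∀ i : ℕ, ℂ) (i : ℕ)‖)]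
    calc (∑' i : {i : ℕ // N ≤ i}, ‖(u : ∀ i : ℕ, ℂ) (i : ℕ)‖ ^ 2)
        ≤ ∑' i : {i : ℕ // N ≤ i}, (2 * ‖(v j : ∀ i : ℕ, ℂ) (i : ℕ)‖ ^ 2
            + 2 * ‖(v j' : ∀ i : ℕ, ℂ) (i : ℕ)‖ ^ 2) := by
          apply Summable.tsum_le_tsum hle
          · apply Summable.of_nonneg_of_le (fun i => by positivity) hle
            exact ((hsumj.mul_left 2).add (hsumj'.mul_left 2))
          · exact ((hsumj.mul_left 2).add (hsumj'.mul_left 2))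
      _ = 2 * (∑' i : {i : ℕ // N ≤ i}, ‖(v j : ∀ i : ℕ, ℂ) (i : ℕ)‖ ^ 2)
            + 2 * (∑' i : {i : ℕ // N ≤ i}, ‖(v j' : ∀ i : ℕ, ℂ) (i : ℕ)‖ ^ 2) := by
          rw [Summable.tsum_add (hsumj.mul_left 2) (hsumj'.mul_left 2), tsum_mul_left, tsum_mul_left]
      _ ≤ 2 * (1/16) + 2 * (1/16) := by
          gcongr
          · exact hN j
          · exact hN j'
      _ ≤ 1/4 := by norm_num
  -- head of u is < 1
  have hhead : (∑ i ∈ Finset.range N, ‖(u : ∀ i : ℕ, ℂ) i‖ ^ 2) < 1 := by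
    have h1 : ∑ i ∈ Finset.range N, ‖(u : ∀ i : ℕ, ℂ) i‖ ^ 2 = ‖w j - w j'‖ ^ 2 := by
      rw [hwnormsq]
      exact Finset.sum_congr rfl fun i _ => by rw [hucoe]
    rw [h1]
    have h2 : ‖w j - w j'‖ < 1 := by rwa [dist_eq_norm] at hdist
    nlinarith [norm_nonneg (w j - w j')]
  have hfinal := split u
  rw [hu2] at hfinal
  linarith
end

section
/- Let f, g : ℝ → ℂ be measurable functions and α, C₁, C₂ > 0 constants such that |f(ω)| ≤ C₁ (|ω| + 1)^{-1} and |g(ω)| ≤ C₂ (|ω| + 1)^{-1-α} for all ω ∈ ℝ. Then there is a constant C₃ > 0 such that the convolution satisfies |(f * g)(ω)| ≤ C₃ |ω|^{-1} for all ω ≠ 0. -/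
open MeasureTheory

private lemma jb_integrable {β : ℝ} (hβ : 1 < β) :
    Integrable (fun v : ℝ => (1 + |v|) ^ (-β)) := by
  have := integrable_one_add_norm (E := ℝ) (μ := volume)
    (r := β) (by simpa using hβ)
  simpa [Real.norm_eq_abs] using this

/-- Convolution decay: if `|f(ω)| ≤ C₁ (|ω|+1)^{-1}` and `|g(ω)| ≤ C₂ (|ω|+1)^{-1-α}`
for measurable `f, g : ℝ → ℂ` with `α, C₁, C₂ > 0`, then the convolution
`(f*g)(ω) = ∫ f(u) g(ω-u) du` satisfies `|(f*g)(ω)| ≤ C₃ |ω|^{-1}` for all `ω ≠ 0`. -/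
theorem statement7 (f g : ℝ → ℂ) (hf : Measurable f) (hg : Measurable g)
    (α C₁ C₂ : ℝ) (hα : 0 < α) (hC₁ : 0 < C₁) (hC₂ : 0 < C₂)
    (hfb : ∀ ω : ℝ, ‖f ω‖ ≤ C₁ * (|ω| + 1)⁻¹)
    (hgb : ∀ ω : ℝ, ‖g ω‖ ≤ C₂ * (|ω| + 1) ^ (-(1 : ℝ) - α)) :
    ∃ C₃ : ℝ, 0 < C₃ ∧ ∀ ω : ℝ, ω ≠ 0 →
      ‖∫ u : ℝ, f u * g (ω - u)‖ ≤ C₃ * |ω|⁻¹ := by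
  set p : ℝ := 1 + α / 2 with hp
  set q : ℝ := (2 + α) / α with hq
  have hpq : Real.HolderConjugate p q := by
    constructor
    · rw [hp, hq]
      field_simp
    · simp only [hp]; linarith
    · rw [hq]; positivity
  have hp1 : 1 < p := by simp only [hp]; linarith
  have h1α : 1 < 1 + α := by linarith
  have h2α : 1 < 2 + α := by linarith
  -- the three bracket functions
  have int₁ := jb_integrable h1α
  have int₂ := jb_integrable hp1
  have int₃ := jb_integrable h2α
  set J₁ : ℝ := ∫ v : ℝ, (1 + |v|) ^ (-(1 + α)) with hJ₁
  set J₂ : ℝ := ∫ v : ℝ, (1 + |v|) ^ (-p) with hJ₂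
  set J₃ : ℝ := ∫ v : ℝ, (1 + |v|) ^ (-(2 + α)) with hJ₃
  have hJ₁0 : 0 ≤ J₁ := integral_nonneg fun v => Real.rpow_nonneg (by positivity) _
  have hJ₂0 : 0 ≤ J₂ := integral_nonneg fun v => Real.rpow_nonneg (by positivity) _
  have hJ₃0 : 0 ≤ J₃ := integral_nonneg fun v => Real.rpow_nonneg (by positivity) _
  refine ⟨C₁ * C₂ * (J₁ + J₂ + J₃) + 1, by positivity, fun ω hω => ?_⟩
  have hωpos : 0 < |ω| := abs_pos.mpr hω
  -- pointwise bound
  have hpt : ∀ u : ℝ, ‖f u * g (ω - u)‖ ≤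
      C₁ * C₂ * |ω|⁻¹ * ((1 + |ω - u|) ^ (-(1 + α)) + (1 + |u|) ^ (-p)
        + (1 + |ω - u|) ^ (-(2 + α))) := by
    intro u
    set x : ℝ := |u| + 1 with hx
    set y : ℝ := |ω - u| + 1 with hy
    have hx0 : (0:ℝ) < x := by positivity
    have hy0 : (0:ℝ) < y := by positivity
    have key : |ω| * (x⁻¹ * y ^ (-(1:ℝ) - α)) ≤
        y ^ (-(1 + α)) + x ^ (-p) + y ^ (-(2 + α)) := by
      have hωxy : |ω| ≤ x + y := by
        have : |ω| ≤ |u| + |ω - u| := by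
          have := abs_add_le u (ω - u)
          simpa using this
        simp only [hx, hy]; linarith
      have step1 : |ω| * (x⁻¹ * y ^ (-(1:ℝ) - α)) ≤
          y ^ (-(1 + α)) + x⁻¹ * y ^ (-α) := by
        have e1 : x * (x⁻¹ * y ^ (-(1:ℝ) - α)) = y ^ (-(1 + α)) := by
          rw [← mul_assoc, mul_inv_cancel₀ hx0.ne', one_mul]
          congr 1
          ring
        have e2 : y * (x⁻¹ * y ^ (-(1:ℝ) - α)) = x⁻¹ * y ^ (-α) := by
          rw [mul_comm y, mul_assoc]
          congr 1
          rw [show (-α) = (-(1:ℝ) - α) + 1 by ring, Real.rpow_add hy0, Real.rpow_one]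
        calc |ω| * (x⁻¹ * y ^ (-(1:ℝ) - α))
            ≤ (x + y) * (x⁻¹ * y ^ (-(1:ℝ) - α)) := by
              apply mul_le_mul_of_nonneg_right hωxy
              positivity
          _ = y ^ (-(1 + α)) + x⁻¹ * y ^ (-α) := by
              rw [add_mul, e1, e2]
      have step2 : x⁻¹ * y ^ (-α) ≤ x ^ (-p) + y ^ (-(2 + α)) := by
        have hy' : (0:ℝ) ≤ y ^ (-α) := Real.rpow_nonneg hy0.le _
        have hyoung := Real.young_inequality_of_nonneg
          (a := x⁻¹) (b := y ^ (-α)) (by positivity) hy' hpq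
        have ea : (x⁻¹) ^ p = x ^ (-p) := by
          rw [Real.inv_rpow hx0.le, ← Real.rpow_neg hx0.le]
        have eb : (y ^ (-α)) ^ q = y ^ (-(2 + α)) := by
          rw [← Real.rpow_mul hy0.le]
          congr 1
          rw [hq]
          field_simp
        calc x⁻¹ * y ^ (-α) ≤ (x⁻¹) ^ p / p + (y ^ (-α)) ^ q / q := hyoung
          _ ≤ (x⁻¹) ^ p + (y ^ (-α)) ^ q :=
              add_le_add (div_le_self (by positivity) hpq.lt.le)
                (div_le_self (by positivity) hpq.symm.lt.le)
          _ = x ^ (-p) + y ^ (-(2 + α)) := by rw [ea, eb]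
      calc |ω| * (x⁻¹ * y ^ (-(1:ℝ) - α))
          ≤ y ^ (-(1 + α)) + x⁻¹ * y ^ (-α) := step1
        _ ≤ y ^ (-(1 + α)) + (x ^ (-p) + y ^ (-(2 + α))) := by linarith [step2]
        _ = y ^ (-(1 + α)) + x ^ (-p) + y ^ (-(2 + α)) := by ring
    have hfg : ‖f u * g (ω - u)‖ ≤ C₁ * C₂ * (x⁻¹ * y ^ (-(1:ℝ) - α)) := by
      rw [norm_mul]
      have h1 := hfb u
      have h2 := hgb (ω - u)
      calc ‖f u‖ * ‖g (ω - u)‖ ≤ (C₁ * x⁻¹) * (C₂ * y ^ (-(1:ℝ) - α)) := by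
            apply mul_le_mul h1 h2 (norm_nonneg _)
            positivity
        _ = C₁ * C₂ * (x⁻¹ * y ^ (-(1:ℝ) - α)) := by ring
    have comm1 : (1 + |ω - u|) = y := by rw [hy]; ring
    have comm2 : (1 + |u|) = x := by rw [hx]; ring
    rw [comm1, comm2]
    calc ‖f u * g (ω - u)‖ ≤ C₁ * C₂ * (x⁻¹ * y ^ (-(1:ℝ) - α)) := hfg
      _ = C₁ * C₂ * |ω|⁻¹ * (|ω| * (x⁻¹ * y ^ (-(1:ℝ) - α))) := by
          field_simp
      _ ≤ C₁ * C₂ * |ω|⁻¹ * (y ^ (-(1 + α)) + x ^ (-p) + y ^ (-(2 + α))) := by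
          apply mul_le_mul_of_nonneg_left key
          positivity
  -- integrability of the dominating function
  have intsh₁ : Integrable (fun u : ℝ => (1 + |ω - u|) ^ (-(1 + α))) :=
    int₁.comp_sub_left ω
  have intsh₃ : Integrable (fun u : ℝ => (1 + |ω - u|) ^ (-(2 + α))) :=
    int₃.comp_sub_left ω
  have hint : Integrable (fun u : ℝ => C₁ * C₂ * |ω|⁻¹ *
      ((1 + |ω - u|) ^ (-(1 + α)) + (1 + |u|) ^ (-p) + (1 + |ω - u|) ^ (-(2 + α)))) :=
    (((intsh₁.add int₂).add intsh₃).const_mul _)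
  calc ‖∫ u : ℝ, f u * g (ω - u)‖
      ≤ ∫ u : ℝ, C₁ * C₂ * |ω|⁻¹ * ((1 + |ω - u|) ^ (-(1 + α)) + (1 + |u|) ^ (-p)
          + (1 + |ω - u|) ^ (-(2 + α))) :=
        norm_integral_le_of_norm_le hint (Filter.Eventually.of_forall hpt)
    _ = C₁ * C₂ * |ω|⁻¹ * (J₁ + J₂ + J₃) := by
        rw [integral_const_mul]
        congr 1
        have hadd : Integrable (fun u : ℝ => (1 + |ω - u|) ^ (-(1 + α)) + (1 + |u|) ^ (-p)) :=
          intsh₁.add int₂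
        rw [integral_add hadd intsh₃, integral_add intsh₁ int₂]
        congr 1
        congr 1
        · exact integral_sub_left_eq_self (fun v : ℝ => (1 + |v|) ^ (-(1 + α))) volume ω
        · exact integral_sub_left_eq_self (fun v : ℝ => (1 + |v|) ^ (-(2 + α))) volume ω
    _ ≤ (C₁ * C₂ * (J₁ + J₂ + J₃) + 1) * |ω|⁻¹ := by
        rw [mul_comm (C₁ * C₂) (|ω|⁻¹), mul_assoc]
        rw [mul_comm]
        apply mul_le_mul_of_nonneg_right _ (by positivity)
        nlinarith [hC₁.le, hC₂.le]
end
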